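/- Let F be a field and f : Σ* → F a word function whose Hankel matrix H(f) has finite rank r (i.e., the row functions u ↦ f(u ∘ ·) span a subspace of F^{Σ*} of dimension at most r). Then f is recognized by a weighted automaton of size at most r over F. -/

import Mathlib

open Matrix

def wordProd {S : Type*} [CommSemiring S] {A : Type*} {r : ℕ}
    (μ : A → Matrix (Fin r) (Fin r) S) (w : List A) : Matrix (Fin r) (Fin r) S :=
  (w.map μ).prod

/-- If the rows of the Hankel matrix of `f` span a subspace of dimension at most `r`
(they all lie in the span of `r` functions), then `f` is recognized by a weighted
automaton of size at most `r`. -/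
theorem recognizable_of_hankel_finite_rank {F A : Type*} [Field F] [Fintype A]
    (f : List A → F) (r : ℕ)
    (h : ∃ g : Fin r → (List A → F),
      ∀ u : List A, (fun v : List A => f (u ++ v)) ∈ Submodule.span F (Set.range g)) :
    ∃ (s : ℕ) (α γ : Fin s → F) (μ : A → Matrix (Fin s) (Fin s) F),
      s ≤ r ∧ ∀ w : List A, f w = α ⬝ᵥ (wordProd μ w *ᵥ γ) := by
  classical
  obtain ⟨g, hg⟩ := h
  -- The space spanned by the rows of the Hankel matrix
  set row : List A → (List A → F) := fun u => fun v => f (u ++ v) with hrow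
  set W : Submodule F (List A → F) := Submodule.span F (Set.range row) with hW
  haveI : FiniteDimensional F (Submodule.span F (Set.range g)) :=
    FiniteDimensional.span_of_finite F (Set.finite_range g)
  have hWle : W ≤ Submodule.span F (Set.range g) := by
    rw [hW, Submodule.span_le]
    rintro _ ⟨u, rfl⟩
    exact hg u
  haveI : FiniteDimensional F W := Submodule.finiteDimensional_of_le hWle
  have hsr : Module.finrank F W ≤ r := by
    calc Module.finrank F W ≤ Module.finrank F (Submodule.span F (Set.range g)) :=
          Submodule.finrank_mono hWle
      _ ≤ Fintype.card (Fin r) := finrank_range_le_card g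
      _ = r := Fintype.card_fin r
  set s := Module.finrank F W with hs
  set b : Module.Basis (Fin s) F W := Module.finBasis F W with hb
  -- the shift operator on functions
  set shift : A → (List A → F) →ₗ[F] (List A → F) := fun σ =>
    { toFun := fun h => fun v => h (σ :: v)
      map_add' := fun x y => rfl
      map_smul' := fun c x => rfl } with hshift
  -- shift preserves W
  have hshiftW : ∀ σ : A, ∀ x ∈ W, shift σ x ∈ W := by
    intro σ
    have : W.map (shift σ) ≤ W := by
      rw [hW, Submodule.map_span, Submodule.span_le]
      rintro _ ⟨_, ⟨u, rfl⟩, rfl⟩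
      refine Submodule.subset_span ⟨u ++ [σ], ?_⟩
      funext v
      simp [row, shift, List.append_assoc]
    intro x hx
    exact this (Submodule.mem_map_of_mem hx)
  set T : A → (W →ₗ[F] W) := fun σ =>
    (shift σ).restrict (fun x hx => hshiftW σ x hx) with hT
  set μ : A → Matrix (Fin s) (Fin s) F := fun σ => (LinearMap.toMatrix b b (T σ))ᵀ with hμ
  set γ : Fin s → F := fun i => (b i : List A → F) [] with hγ
  have hfW : row [] ∈ W := Submodule.subset_span ⟨[], rfl⟩
  set α : Fin s → F := ⇑(b.repr ⟨row [], hfW⟩) with hα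
  -- main lemma
  have main : ∀ (w : List A) (x : W),
      (b.repr x : Fin s → F) ⬝ᵥ (wordProd μ w *ᵥ γ) = (x : List A → F) w := by
    intro w
    induction w with
    | nil =>
      intro x
      have hx : x = (Finset.univ.sum fun i => b.repr x i • b i) := (b.sum_repr x).symm
      have hxval : (x : List A → F) [] =
          Finset.univ.sum fun i => b.repr x i * (b i : List A → F) [] := by
        conv_lhs => rw [hx]
        rw [Submodule.coe_sum]
        simp [Finset.sum_apply]
      rw [hxval]
      simp [wordProd, dotProduct, γ, Matrix.one_mulVec]
    | cons σ w ih =>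
      intro x
      have hword : wordProd μ (σ :: w) = μ σ * wordProd μ w := by
        simp [wordProd]
      calc (b.repr x : Fin s → F) ⬝ᵥ (wordProd μ (σ :: w) *ᵥ γ)
          = (b.repr x : Fin s → F) ⬝ᵥ
              ((LinearMap.toMatrix b b (T σ))ᵀ *ᵥ (wordProd μ w *ᵥ γ)) := by
            rw [hword, ← Matrix.mulVec_mulVec]
        _ = ((LinearMap.toMatrix b b (T σ)) *ᵥ (b.repr x : Fin s → F)) ⬝ᵥ
              (wordProd μ w *ᵥ γ) := by
            rw [Matrix.dotProduct_mulVec, Matrix.vecMul_transpose]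
        _ = (b.repr (T σ x) : Fin s → F) ⬝ᵥ (wordProd μ w *ᵥ γ) := by
            rw [LinearMap.toMatrix_mulVec_repr]
        _ = ((T σ x : W) : List A → F) w := ih (T σ x)
        _ = (x : List A → F) (σ :: w) := rfl
  refine ⟨s, α, γ, μ, hsr, fun w => ?_⟩
  exact (main w ⟨row [], hfW⟩).symm
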